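/- arXiv:math/0501418 — 8 statements merged into one kernel-verified Lean document; each statement's English description precedes it below -/
import Mathlib

section
/- Let A and B be lattices, let a, a' ∈ A and b, b' ∈ B. Then: (a) a ∘ b ⊆ a' □ b' if and only if a ≤ a' or b ≤ b'; (b) (a ∘ b) ∩ (a' ∘ b') = (a ∧ a') ∘ (b ∧ b'); (c) (a □ b) ∩ (a' ∘ b') = ((a ∧ a') ∘ b') ∪ (a' ∘ (b ∧ b')); (d) (a □ b) ∩ (a' □ b') = ((a ∧ a') □ (b ∧ b')) ∪ (a ∘ b') ∪ (a' ∘ b); (e) a □ b ⊆ a' □ b' if and only if either every element of A is ≤ a', or every element of B is ≤ b', or (a ≤ a' and b ≤ b'). -/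
/-- The pure box `a □ b = {⟨x,y⟩ : x ≤ a or y ≤ b}`. -/
def pureBox {A B : Type*} [Lattice A] [Lattice B] (a : A) (b : B) : Set (A × B) :=
  {p : A × B | p.1 ≤ a ∨ p.2 ≤ b}

/-- `a ∘ b = {⟨x,y⟩ : x ≤ a and y ≤ b}`. -/
def pureCirc {A B : Type*} [Lattice A] [Lattice B] (a : A) (b : B) : Set (A × B) :=
  {p : A × B | p.1 ≤ a ∧ p.2 ≤ b}

/-- The box product `A □ B`: all finite (nonempty) intersections of pure boxes. -/
def BoxProd (A B : Type*) [Lattice A] [Lattice B] : Set (Set (A × B)) :=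
  {H | ∃ (n : ℕ) (a : Fin (n + 1) → A) (b : Fin (n + 1) → B),
    H = ⋂ i, pureBox (a i) (b i)}

/-- `A ⊡ B`: all finite unions of pure boxes (at least one) and pure circles. -/
def BoxDot (A B : Type*) [Lattice A] [Lattice B] : Set (Set (A × B)) :=
  {H | ∃ (m n : ℕ) (a : Fin (m + 1) → A) (b : Fin (m + 1) → B)
      (c : Fin n → A) (d : Fin n → B),
    H = (⋃ i, pureBox (a i) (b i)) ∪ ⋃ j, pureCirc (c j) (d j)}

/-- The box closure of a subset of `A × B`: intersection of all pure boxes containing it. -/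
def BoxCl {A B : Type*} [Lattice A] [Lattice B] (X : Set (A × B)) : Set (A × B) :=
  ⋂ (a : A) (b : B) (_ : X ⊆ pureBox a b), pureBox a b

/-- The pure lattice tensor `a ⊠ b = (a ∘ b) ∪ ⊥_{A,B}`, where `⊥_{A,B}` consists of
the pairs one of whose coordinates is a least element. -/
def pureTens {A B : Type*} [Lattice A] [Lattice B] (a : A) (b : B) : Set (A × B) :=
  pureCirc a b ∪ {p : A × B | IsBot p.1 ∨ IsBot p.2}

/-- A subset of `A × B` is confined if it is contained in some pure lattice tensor. -/
def Confined {A B : Type*} [Lattice A] [Lattice B] (X : Set (A × B)) : Prop :=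
  ∃ (a : A) (b : B), X ⊆ pureTens a b

/-- The lattice tensor product `A ⊠ B`: all confined elements of `A □ B`. -/
def LatTens (A B : Type*) [Lattice A] [Lattice B] : Set (Set (A × B)) :=
  {H | H ∈ BoxProd A B ∧ Confined H}

/-- `X^△ = {⟨a,b⟩ : ⟨x,y⟩ ◁ ⟨a,b⟩ for all ⟨x,y⟩ ∈ X}` where `⟨x,y⟩ ◁ ⟨a,b⟩` iff
`x ≤ a` or `y ≤ b`. -/
def trUp {A B : Type*} [Lattice A] [Lattice B] (X : Set (A × B)) : Set (A × B) :=
  {p : A × B | ∀ q ∈ X, q.1 ≤ p.1 ∨ q.2 ≤ p.2}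

/-- `X^▽ = {⟨a,b⟩ : ⟨a,b⟩ ◁ ⟨x,y⟩ for all ⟨x,y⟩ ∈ X}`. -/
def trDown {A B : Type*} [Lattice A] [Lattice B] (X : Set (A × B)) : Set (A × B) :=
  {p : A × B | ∀ q ∈ X, p.1 ≤ q.1 ∨ p.2 ≤ q.2}

/-- Lemma 2.4 of the paper: basic identities for pure boxes and pure circles. -/
theorem stmt_0 {A B : Type*} [Lattice A] [Lattice B] (a a' : A) (b b' : B) :
    (pureCirc a b ⊆ pureBox a' b' ↔ a ≤ a' ∨ b ≤ b') ∧
    (pureCirc a b ∩ pureCirc a' b' = pureCirc (a ⊓ a') (b ⊓ b')) ∧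
    (pureBox a b ∩ pureCirc a' b' = pureCirc (a ⊓ a') b' ∪ pureCirc a' (b ⊓ b')) ∧
    (pureBox a b ∩ pureBox a' b' =
      pureBox (a ⊓ a') (b ⊓ b') ∪ pureCirc a b' ∪ pureCirc a' b) ∧
    (pureBox a b ⊆ pureBox a' b' ↔
      (∀ x : A, x ≤ a') ∨ (∀ y : B, y ≤ b') ∨ (a ≤ a' ∧ b ≤ b')) := by
  refine ⟨?_, ?_, ?_, ?_, ?_⟩
  · constructor
    · intro h
      exact h (show (a, b) ∈ pureCirc a b from ⟨le_rfl, le_rfl⟩)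
    · rintro (h | h) ⟨x, y⟩ ⟨hx, hy⟩
      · exact Or.inl (hx.trans h)
      · exact Or.inr (hy.trans h)
  · ext ⟨x, y⟩
    simp only [pureCirc, Set.mem_inter_iff, Set.mem_setOf_eq, le_inf_iff]
    tauto
  · ext ⟨x, y⟩
    simp only [pureBox, pureCirc, Set.mem_inter_iff, Set.mem_union,
      Set.mem_setOf_eq, le_inf_iff]
    tauto
  · ext ⟨x, y⟩
    simp only [pureBox, pureCirc, Set.mem_inter_iff, Set.mem_union,
      Set.mem_setOf_eq, le_inf_iff]
    tauto
  · constructor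
    · intro h
      by_cases hA : ∀ x : A, x ≤ a'
      · exact Or.inl hA
      by_cases hB : ∀ y : B, y ≤ b'
      · exact Or.inr (Or.inl hB)
      push_neg at hA hB
      obtain ⟨x0, hx0⟩ := hA
      obtain ⟨y0, hy0⟩ := hB
      have h1 : (x0, b) ∈ pureBox a b := Or.inr le_rfl
      have h2 : (a, y0) ∈ pureBox a b := Or.inl le_rfl
      have hb : b ≤ b' := (h h1).resolve_left hx0
      have ha : a ≤ a' := (h h2).resolve_right hy0
      exact Or.inr (Or.inr ⟨ha, hb⟩)
    · rintro (h | h | ⟨h1, h2⟩) ⟨x, y⟩ hp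
      · exact Or.inl (h x)
      · exact Or.inr (h y)
      · rcases hp with hx | hy
        · exact Or.inl (hx.trans h1)
        · exact Or.inr (hy.trans h2)
end

section
/- Let A and B be lattices. Then A □ B is a closure system in A ⊡ B: for every H ∈ A ⊡ B there is a least element H̄ of A □ B containing H. Explicitly, if H = ⋃_{i<m}(a_i □ b_i) ∪ ⋃_{j<n}(c_j ∘ d_j) with m > 0 and n ≥ 0, then H̄ = ⋂_{X ⊆ n} ((ā ∨ c^(X)) □ (b̄ ∨ d^(n−X))), where ā = ⋁_{i<m} a_i, b̄ = ⋁_{i<m} b_i, c^(X) = ⋁_{j∈X} c_j, d^(n−X) = ⋁_{j∈n−X} d_j, with the convention that ā ∨ c^(∅) = ā and b̄ ∨ d^(∅) = b̄. -/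
/-- `x ∨ ⋁_{j ∈ X} c j`, with the convention that the value is `x` when `X = ∅`. -/
def joinWith {L : Type*} [Lattice L] {ι : Type*} (x : L) (c : ι → L) (X : Finset ι) : L :=
  if h : X.Nonempty then x ⊔ X.sup' h c else x


section Aux
variable {A B : Type*} [Lattice A] [Lattice B]

lemma le_joinWith {L : Type*} [Lattice L] {ι : Type*} (x : L) (c : ι → L) (X : Finset ι) :
    x ≤ joinWith x c X := by
  unfold joinWith; split
  · exact le_sup_left
  · exact le_rfl

lemma mem_le_joinWith {L : Type*} [Lattice L] {ι : Type*} (x : L) (c : ι → L) {X : Finset ι}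
    {j : ι} (hj : j ∈ X) : c j ≤ joinWith x c X := by
  unfold joinWith
  rw [dif_pos ⟨j, hj⟩]
  exact le_trans (Finset.le_sup' c hj) le_sup_right

lemma joinWith_le {L : Type*} [Lattice L] {ι : Type*} {x u : L} {c : ι → L} {X : Finset ι}
    (hx : x ≤ u) (hc : ∀ j ∈ X, c j ≤ u) : joinWith x c X ≤ u := by
  unfold joinWith; split
  · next h => exact sup_le hx (Finset.sup'_le h c hc)
  · exact hx

lemma iInter_pureBox_mem_boxProd {ι : Type*} [Fintype ι] [Nonempty ι]
    (a : ι → A) (b : ι → B) :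
    (⋂ i, pureBox (a i) (b i)) ∈ BoxProd A B := by
  obtain ⟨k, hk⟩ := Nat.exists_eq_succ_of_ne_zero (Fintype.card_ne_zero (α := ι))
  let e : ι ≃ Fin (k + 1) := Fintype.equivFinOfCardEq hk
  exact ⟨k, a ∘ e.symm, b ∘ e.symm,
    (e.symm.surjective.iInter_comp fun i => pureBox (a i) (b i)).symm⟩

lemma pureBox_subset_pureBox {a u : A} {b v : B}
    (h : pureBox a b ⊆ pureBox u v) (hu : ¬ IsTop u) (hv : ¬ IsTop v) :
    a ≤ u ∧ b ≤ v := by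
  obtain ⟨x, hx⟩ := not_forall.1 hu
  obtain ⟨y, hy⟩ := not_forall.1 hv
  have h1 : (x : A) ≤ u ∨ b ≤ v := h (Or.inr le_rfl : (x, b) ∈ pureBox a b)
  have h2 : a ≤ u ∨ (y : B) ≤ v := h (Or.inl le_rfl : (a, y) ∈ pureBox a b)
  exact ⟨h2.resolve_right hy, h1.resolve_left hx⟩

lemma subset_boxClosure (m n : ℕ) (a : Fin (m + 1) → A) (b : Fin (m + 1) → B)
    (c : Fin n → A) (d : Fin n → B) :
    ((⋃ i, pureBox (a i) (b i)) ∪ ⋃ j, pureCirc (c j) (d j)) ⊆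
      ⋂ X : Finset (Fin n), pureBox
        (joinWith (Finset.univ.sup' Finset.univ_nonempty a) c X)
        (joinWith (Finset.univ.sup' Finset.univ_nonempty b) d Xᶜ) := by
  intro p hp
  refine Set.mem_iInter.2 fun X => ?_
  rcases hp with hp | hp
  · obtain ⟨i, hpi⟩ := Set.mem_iUnion.1 hp
    rcases hpi with hx | hy
    · exact Or.inl (le_trans hx (le_trans (Finset.le_sup' a (Finset.mem_univ i))
        (le_joinWith _ _ _)))
    · exact Or.inr (le_trans hy (le_trans (Finset.le_sup' b (Finset.mem_univ i))
        (le_joinWith _ _ _)))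
  · obtain ⟨j, hx, hy⟩ := Set.mem_iUnion.1 hp
    by_cases hj : j ∈ X
    · exact Or.inl (le_trans hx (mem_le_joinWith _ _ hj))
    · exact Or.inr (le_trans hy (mem_le_joinWith _ _ (Finset.mem_compl.2 hj)))

lemma boxClosure_subset_pureBox (m n : ℕ) (a : Fin (m + 1) → A) (b : Fin (m + 1) → B)
    (c : Fin n → A) (d : Fin n → B) {u : A} {v : B}
    (h : ((⋃ i, pureBox (a i) (b i)) ∪ ⋃ j, pureCirc (c j) (d j)) ⊆ pureBox u v) :
    (⋂ X : Finset (Fin n), pureBox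
        (joinWith (Finset.univ.sup' Finset.univ_nonempty a) c X)
        (joinWith (Finset.univ.sup' Finset.univ_nonempty b) d Xᶜ)) ⊆ pureBox u v := by
  classical
  by_cases hu : IsTop u
  · exact fun p _ => Or.inl (hu p.1)
  by_cases hv : IsTop v
  · exact fun p _ => Or.inr (hv p.2)
  have hab : ∀ i, a i ≤ u ∧ b i ≤ v := fun i =>
    pureBox_subset_pureBox
      (fun p hp => h (Set.mem_union_left _ (Set.mem_iUnion.2 ⟨i, hp⟩))) hu hv
  have hcd : ∀ j, c j ≤ u ∨ d j ≤ v := fun j =>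
    h (Set.mem_union_right _ (Set.mem_iUnion.2 ⟨j, (⟨le_rfl, le_rfl⟩ : ((c j, d j) : A × B) ∈ pureCirc (c j) (d j))⟩))
  set X0 : Finset (Fin n) := Finset.univ.filter (fun j => c j ≤ u) with hX0
  intro p hp
  rcases Set.mem_iInter.1 hp X0 with hx | hy
  · refine Or.inl (le_trans hx (joinWith_le ?_ ?_))
    · exact Finset.sup'_le _ a fun i _ => (hab i).1
    · intro j hj; exact (Finset.mem_filter.1 hj).2
  · refine Or.inr (le_trans hy (joinWith_le ?_ ?_))
    · exact Finset.sup'_le _ b fun i _ => (hab i).2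
    · intro j hj
      have hne : ¬ c j ≤ u := by
        have := Finset.mem_compl.1 hj
        simpa [hX0] using this
      exact (hcd j).resolve_left hne

end Aux

/-- `A □ B` is a closure system in `A ⊡ B`, with the explicit formula for the closure. -/
theorem stmt_2 {A B : Type*} [Lattice A] [Lattice B] :
    (∀ H ∈ BoxDot A B, ∃ Hbar ∈ BoxProd A B, H ⊆ Hbar ∧
      ∀ K ∈ BoxProd A B, H ⊆ K → Hbar ⊆ K) ∧
    ∀ (m n : ℕ) (a : Fin (m + 1) → A) (b : Fin (m + 1) → B)
      (c : Fin n → A) (d : Fin n → B),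
      (⋂ X : Finset (Fin n), pureBox
          (joinWith (Finset.univ.sup' Finset.univ_nonempty a) c X)
          (joinWith (Finset.univ.sup' Finset.univ_nonempty b) d Xᶜ)) ∈ BoxProd A B ∧
      ((⋃ i, pureBox (a i) (b i)) ∪ ⋃ j, pureCirc (c j) (d j)) ⊆
        (⋂ X : Finset (Fin n), pureBox
          (joinWith (Finset.univ.sup' Finset.univ_nonempty a) c X)
          (joinWith (Finset.univ.sup' Finset.univ_nonempty b) d Xᶜ)) ∧
      ∀ K ∈ BoxProd A B,
        ((⋃ i, pureBox (a i) (b i)) ∪ ⋃ j, pureCirc (c j) (d j)) ⊆ K →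
        (⋂ X : Finset (Fin n), pureBox
          (joinWith (Finset.univ.sup' Finset.univ_nonempty a) c X)
          (joinWith (Finset.univ.sup' Finset.univ_nonempty b) d Xᶜ)) ⊆ K := by
  classical
  have main : ∀ (m n : ℕ) (a : Fin (m + 1) → A) (b : Fin (m + 1) → B)
      (c : Fin n → A) (d : Fin n → B),
      (⋂ X : Finset (Fin n), pureBox
          (joinWith (Finset.univ.sup' Finset.univ_nonempty a) c X)
          (joinWith (Finset.univ.sup' Finset.univ_nonempty b) d Xᶜ)) ∈ BoxProd A B ∧
      ((⋃ i, pureBox (a i) (b i)) ∪ ⋃ j, pureCirc (c j) (d j)) ⊆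
        (⋂ X : Finset (Fin n), pureBox
          (joinWith (Finset.univ.sup' Finset.univ_nonempty a) c X)
          (joinWith (Finset.univ.sup' Finset.univ_nonempty b) d Xᶜ)) ∧
      ∀ K ∈ BoxProd A B,
        ((⋃ i, pureBox (a i) (b i)) ∪ ⋃ j, pureCirc (c j) (d j)) ⊆ K →
        (⋂ X : Finset (Fin n), pureBox
          (joinWith (Finset.univ.sup' Finset.univ_nonempty a) c X)
          (joinWith (Finset.univ.sup' Finset.univ_nonempty b) d Xᶜ)) ⊆ K := by
    intro m n a b c d
    refine ⟨iInter_pureBox_mem_boxProd _ _, subset_boxClosure m n a b c d, ?_⟩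
    rintro K ⟨N, u, v, rfl⟩ hK
    refine Set.subset_iInter fun i => ?_
    exact boxClosure_subset_pureBox m n a b c d (hK.trans (Set.iInter_subset _ i))
  refine ⟨?_, main⟩
  rintro H ⟨m, n, a, b, c, d, rfl⟩
  obtain ⟨h1, h2, h3⟩ := main m n a b c d
  exact ⟨_, h1, h2, h3⟩
end

section
/- Let A and B be lattices. For every H ∈ A ⊡ B, the box closure BoxCl(H) belongs to A □ B. Consequently, A □ B, partially ordered by set inclusion, is a lattice, in which the meet of H and K is H ∩ K and the join of H and K is BoxCl(H ∪ K). -/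
section BoxLemmas
variable {A B : Type*} [Lattice A] [Lattice B]

variable {A B : Type*} [Lattice A] [Lattice B]

lemma subset_boxCl (X : Set (A × B)) : X ⊆ BoxCl X := by
  intro p hp
  simp only [BoxCl, Set.mem_iInter]
  exact fun a b h => h hp

lemma boxCl_subset {X : Set (A × B)} {a : A} {b : B} (h : X ⊆ pureBox a b) :
    BoxCl X ⊆ pureBox a b := by
  intro p hp
  simp only [BoxCl, Set.mem_iInter] at hp
  exact hp a b h

lemma boxCl_subset_iff {L : Set (A × B)} (hL : L ∈ BoxProd A B) (X : Set (A × B)) :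
    BoxCl X ⊆ L ↔ X ⊆ L := by
  obtain ⟨n, a, b, rfl⟩ := hL
  constructor
  · exact fun h => (subset_boxCl X).trans h
  · intro h
    exact Set.subset_iInter fun i => boxCl_subset (h.trans (Set.iInter_subset _ i))

lemma boxProd_of_fintype {ι : Type} [Fintype ι] [Nonempty ι] (a : ι → A) (b : ι → B) :
    (⋂ i, pureBox (a i) (b i)) ∈ BoxProd A B := by
  obtain ⟨k, hk⟩ := Nat.exists_eq_succ_of_ne_zero (Fintype.card_ne_zero (α := ι))
  let e : Fin (k + 1) ≃ ι := (Fintype.equivFinOfCardEq hk).symm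
  exact ⟨k, fun i => a (e i), fun i => b (e i),
    (e.surjective.iInter_comp fun i => pureBox (a i) (b i)).symm⟩

lemma boxDot_of_fintype {ι κ : Type} [Fintype ι] [Nonempty ι] [Fintype κ]
    (a : ι → A) (b : ι → B) (c : κ → A) (d : κ → B) :
    ((⋃ i, pureBox (a i) (b i)) ∪ ⋃ j, pureCirc (c j) (d j)) ∈ BoxDot A B := by
  obtain ⟨k, hk⟩ := Nat.exists_eq_succ_of_ne_zero (Fintype.card_ne_zero (α := ι))
  let e : Fin (k + 1) ≃ ι := (Fintype.equivFinOfCardEq hk).symm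
  let f : Fin (Fintype.card κ) ≃ κ := (Fintype.equivFin κ).symm
  refine ⟨k, Fintype.card κ, fun i => a (e i), fun i => b (e i),
    fun j => c (f j), fun j => d (f j), ?_⟩
  rw [e.surjective.iUnion_comp fun i => pureBox (a i) (b i),
      f.surjective.iUnion_comp fun j => pureCirc (c j) (d j)]


variable {A B : Type*} [Lattice A] [Lattice B]

/-- First component of the circle attached to `S` in the normal form of an
intersection of boxes. -/
def circFst {n : ℕ} (a : Fin (n + 1) → A) (S : Fin (n + 1) → Bool) : A :=
  if h : (Finset.univ.filter fun i => S i = true).Nonempty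
  then (Finset.univ.filter fun i => S i = true).inf' h a
  else Finset.univ.inf' Finset.univ_nonempty a

def circSnd {n : ℕ} (b : Fin (n + 1) → B) (S : Fin (n + 1) → Bool) : B :=
  if h : (Finset.univ.filter fun i => S i = false).Nonempty
  then (Finset.univ.filter fun i => S i = false).inf' h b
  else Finset.univ.inf' Finset.univ_nonempty b

lemma circFst_le {n : ℕ} (a : Fin (n + 1) → A) {S : Fin (n + 1) → Bool} {i : Fin (n + 1)}
    (h : S i = true) : circFst a S ≤ a i := by
  rw [circFst, dif_pos ⟨i, by simp [h]⟩]
  exact Finset.inf'_le _ (by simp [h])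

lemma circSnd_le {n : ℕ} (b : Fin (n + 1) → B) {S : Fin (n + 1) → Bool} {i : Fin (n + 1)}
    (h : S i = false) : circSnd b S ≤ b i := by
  rw [circSnd, dif_pos ⟨i, by simp [h]⟩]
  exact Finset.inf'_le _ (by simp [h])

/-- Normal form: an intersection of pure boxes is a union of one pure box and
finitely many pure circles. -/
lemma iInter_pureBox_eq {n : ℕ} (a : Fin (n + 1) → A) (b : Fin (n + 1) → B) :
    ⋂ i, pureBox (a i) (b i) =
      pureBox (Finset.univ.inf' Finset.univ_nonempty a)
              (Finset.univ.inf' Finset.univ_nonempty b)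
      ∪ ⋃ S : Fin (n + 1) → Bool, pureCirc (circFst a S) (circSnd b S) := by
  apply subset_antisymm
  · intro p hp
    simp only [Set.mem_iInter] at hp
    classical
    by_cases hall : ∀ i, p.1 ≤ a i
    · exact Or.inl (Or.inl (Finset.le_inf' _ _ fun i _ => hall i))
    by_cases hnone : ∀ i, ¬ p.1 ≤ a i
    · refine Or.inl (Or.inr (Finset.le_inf' _ _ fun i _ => ?_))
      exact (hp i).resolve_left (hnone i)
    push_neg at hall hnone
    obtain ⟨i0, hi0⟩ := hall
    obtain ⟨i1, hi1⟩ := hnone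
    refine Or.inr (Set.mem_iUnion.2 ⟨fun i => decide (p.1 ≤ a i), ?_, ?_⟩)
    · rw [circFst, dif_pos ⟨i1, by simp [hi1]⟩]
      refine Finset.le_inf' _ _ fun i hi => ?_
      simp only [Finset.mem_filter, decide_eq_true_eq] at hi
      exact hi.2
    · rw [circSnd, dif_pos ⟨i0, by simp [hi0]⟩]
      refine Finset.le_inf' _ _ fun i hi => ?_
      simp only [Finset.mem_filter, Finset.mem_univ, true_and,
        decide_eq_false_iff_not] at hi
      exact (hp i).resolve_left hi
  · rintro p (hp | hp)
    · refine Set.mem_iInter.2 fun i => ?_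
      rcases hp with h | h
      · exact Or.inl (h.trans (Finset.inf'_le _ (Finset.mem_univ i)))
      · exact Or.inr (h.trans (Finset.inf'_le _ (Finset.mem_univ i)))
    · simp only [Set.mem_iUnion] at hp
      obtain ⟨S, h1, h2⟩ := hp
      refine Set.mem_iInter.2 fun i => ?_
      cases hS : S i
      · exact Or.inr (h2.trans (circSnd_le b hS))
      · exact Or.inl (h1.trans (circFst_le a hS))


variable {A B : Type*} [Lattice A] [Lattice B]

def uSide {m n : ℕ} (a : Fin (m + 1) → A) (c : Fin n → A) (S : Fin n → Bool) : A :=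
  if h : (Finset.univ.filter fun j => S j = true).Nonempty
  then Finset.univ.sup' Finset.univ_nonempty a ⊔ (Finset.univ.filter fun j => S j = true).sup' h c
  else Finset.univ.sup' Finset.univ_nonempty a

def vSide {m n : ℕ} (b : Fin (m + 1) → B) (d : Fin n → B) (S : Fin n → Bool) : B :=
  if h : (Finset.univ.filter fun j => S j = false).Nonempty
  then Finset.univ.sup' Finset.univ_nonempty b ⊔ (Finset.univ.filter fun j => S j = false).sup' h d
  else Finset.univ.sup' Finset.univ_nonempty b

lemma le_uSide_box {m n : ℕ} (a : Fin (m + 1) → A) (c : Fin n → A) (S : Fin n → Bool)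
    (i : Fin (m + 1)) : a i ≤ uSide a c S := by
  have h0 : a i ≤ Finset.univ.sup' Finset.univ_nonempty a :=
    Finset.le_sup' _ (Finset.mem_univ i)
  rw [uSide]
  split
  · exact h0.trans le_sup_left
  · exact h0

lemma le_vSide_box {m n : ℕ} (b : Fin (m + 1) → B) (d : Fin n → B) (S : Fin n → Bool)
    (i : Fin (m + 1)) : b i ≤ vSide b d S := by
  have h0 : b i ≤ Finset.univ.sup' Finset.univ_nonempty b :=
    Finset.le_sup' _ (Finset.mem_univ i)
  rw [vSide]
  split
  · exact h0.trans le_sup_left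
  · exact h0

lemma le_uSide_circ {m n : ℕ} (a : Fin (m + 1) → A) (c : Fin n → A) {S : Fin n → Bool}
    {j : Fin n} (h : S j = true) : c j ≤ uSide a c S := by
  rw [uSide, dif_pos ⟨j, by simp [h]⟩]
  exact (Finset.le_sup' _ (by simp [h])).trans le_sup_right

lemma le_vSide_circ {m n : ℕ} (b : Fin (m + 1) → B) (d : Fin n → B) {S : Fin n → Bool}
    {j : Fin n} (h : S j = false) : d j ≤ vSide b d S := by
  rw [vSide, dif_pos ⟨j, by simp [h]⟩]
  exact (Finset.le_sup' _ (by simp [h])).trans le_sup_right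

lemma uSide_le {m n : ℕ} {a : Fin (m + 1) → A} {c : Fin n → A} {S : Fin n → Bool} {u : A}
    (h1 : ∀ i, a i ≤ u) (h2 : ∀ j, S j = true → c j ≤ u) : uSide a c S ≤ u := by
  rw [uSide]
  split
  · exact sup_le (Finset.sup'_le _ _ fun i _ => h1 i)
      (Finset.sup'_le _ _ fun j hj => h2 j (by simpa using (Finset.mem_filter.1 hj).2))
  · exact Finset.sup'_le _ _ fun i _ => h1 i

lemma vSide_le {m n : ℕ} {b : Fin (m + 1) → B} {d : Fin n → B} {S : Fin n → Bool} {v : B}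
    (h1 : ∀ i, b i ≤ v) (h2 : ∀ j, S j = false → d j ≤ v) : vSide b d S ≤ v := by
  rw [vSide]
  split
  · exact sup_le (Finset.sup'_le _ _ fun i _ => h1 i)
      (Finset.sup'_le _ _ fun j hj => h2 j (by simpa using (Finset.mem_filter.1 hj).2))
  · exact Finset.sup'_le _ _ fun i _ => h1 i

lemma boxCl_subset' {X : Set (A × B)} {a : A} {b : B} (h : X ⊆ pureBox a b) :
    BoxCl X ⊆ pureBox a b := by
  intro p hp
  simp only [BoxCl, Set.mem_iInter] at hp
  exact hp a b h

/-- The closure formula: the box closure of an element of `A ⊡ B` is an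
intersection of pure boxes. -/
lemma boxCl_union_form {m n : ℕ} (a : Fin (m + 1) → A) (b : Fin (m + 1) → B)
    (c : Fin n → A) (d : Fin n → B) :
    BoxCl ((⋃ i, pureBox (a i) (b i)) ∪ ⋃ j, pureCirc (c j) (d j)) =
      ⋂ S : Fin n → Bool, pureBox (uSide a c S) (vSide b d S) := by
  apply subset_antisymm
  · refine Set.subset_iInter fun S => boxCl_subset' ?_
    rintro p (hp | hp)
    · simp only [Set.mem_iUnion] at hp
      obtain ⟨i, hi⟩ := hp
      rcases hi with h | h
      · exact Or.inl (h.trans (le_uSide_box a c S i))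
      · exact Or.inr (h.trans (le_vSide_box b d S i))
    · simp only [Set.mem_iUnion] at hp
      obtain ⟨j, h1, h2⟩ := hp
      cases hS : S j
      · exact Or.inr (h2.trans (le_vSide_circ b d hS))
      · exact Or.inl (h1.trans (le_uSide_circ a c hS))
  · intro p hp
    simp only [Set.mem_iInter] at hp
    simp only [BoxCl, Set.mem_iInter]
    intro u v hsub
    by_cases hv : ∀ y : B, y ≤ v
    · exact Or.inr (hv p.2)
    by_cases hu : ∀ x : A, x ≤ u
    · exact Or.inl (hu p.1)
    push_neg at hv hu
    obtain ⟨y0, hy0⟩ := hv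
    obtain ⟨x0, hx0⟩ := hu
    have ha : ∀ i, a i ≤ u := by
      intro i
      have hmem : ((a i, y0) : A × B) ∈ (⋃ i, pureBox (a i) (b i)) ∪ ⋃ j, pureCirc (c j) (d j) :=
        Or.inl (Set.mem_iUnion.2 ⟨i, Or.inl le_rfl⟩)
      exact (hsub hmem).resolve_right hy0
    have hb : ∀ i, b i ≤ v := by
      intro i
      have hmem : ((x0, b i) : A × B) ∈ (⋃ i, pureBox (a i) (b i)) ∪ ⋃ j, pureCirc (c j) (d j) :=
        Or.inl (Set.mem_iUnion.2 ⟨i, Or.inr le_rfl⟩)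
      exact (hsub hmem).resolve_left hx0
    have hcd : ∀ j, c j ≤ u ∨ d j ≤ v := by
      intro j
      have hmem : ((c j, d j) : A × B) ∈ (⋃ i, pureBox (a i) (b i)) ∪ ⋃ j, pureCirc (c j) (d j) :=
        Or.inr (Set.mem_iUnion.2 ⟨j, le_rfl, le_rfl⟩)
      exact hsub hmem
    classical
    rcases hp (fun j => decide (c j ≤ u)) with h | h
    · exact Or.inl (h.trans (uSide_le ha fun j hj => of_decide_eq_true hj))
    · refine Or.inr (h.trans (vSide_le hb fun j hj => ?_))
      exact (hcd j).resolve_left (of_decide_eq_false hj)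


lemma union_mem_boxDot {H K : Set (A × B)} (hH : H ∈ BoxProd A B) (hK : K ∈ BoxProd A B) :
    H ∪ K ∈ BoxDot A B := by
  obtain ⟨m, a, b, rfl⟩ := hH
  obtain ⟨n, c, d, rfl⟩ := hK
  rw [iInter_pureBox_eq a b, iInter_pureBox_eq c d]
  have key : (pureBox (Finset.univ.inf' Finset.univ_nonempty a)
        (Finset.univ.inf' Finset.univ_nonempty b)
      ∪ ⋃ S : Fin (m + 1) → Bool, pureCirc (circFst a S) (circSnd b S))
      ∪ (pureBox (Finset.univ.inf' Finset.univ_nonempty c)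
        (Finset.univ.inf' Finset.univ_nonempty d)
      ∪ ⋃ S : Fin (n + 1) → Bool, pureCirc (circFst c S) (circSnd d S)) =
      (⋃ t : Bool, pureBox
        (cond t (Finset.univ.inf' Finset.univ_nonempty a) (Finset.univ.inf' Finset.univ_nonempty c))
        (cond t (Finset.univ.inf' Finset.univ_nonempty b) (Finset.univ.inf' Finset.univ_nonempty d)))
      ∪ ⋃ j : (Fin (m + 1) → Bool) ⊕ (Fin (n + 1) → Bool),
          pureCirc (Sum.elim (circFst a) (circFst c) j) (Sum.elim (circSnd b) (circSnd d) j) := by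
    rw [Set.iUnion_sum]
    have hbool : (⋃ t : Bool, pureBox
        (cond t (Finset.univ.inf' Finset.univ_nonempty a) (Finset.univ.inf' Finset.univ_nonempty c))
        (cond t (Finset.univ.inf' Finset.univ_nonempty b)
          (Finset.univ.inf' Finset.univ_nonempty d))) =
        pureBox (Finset.univ.inf' Finset.univ_nonempty a)
          (Finset.univ.inf' Finset.univ_nonempty b)
        ∪ pureBox (Finset.univ.inf' Finset.univ_nonempty c)
          (Finset.univ.inf' Finset.univ_nonempty d) := by
      rw [Set.union_eq_iUnion]
      exact Set.iUnion_congr fun t => by cases t <;> rfl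
    rw [hbool]
    ext p
    simp only [Set.mem_union]
    tauto
  rw [key]
  exact boxDot_of_fintype _ _ _ _

end BoxLemmas

/-- For `H ∈ A ⊡ B`, `BoxCl H ∈ A □ B`; consequently `A □ B` is a lattice under
inclusion, with meet the intersection and join the box closure of the union. -/
theorem stmt_3 {A B : Type*} [Lattice A] [Lattice B] :
    (∀ H ∈ BoxDot A B, BoxCl H ∈ BoxProd A B) ∧
    ∀ H ∈ BoxProd A B, ∀ K ∈ BoxProd A B,
      H ∩ K ∈ BoxProd A B ∧ BoxCl (H ∪ K) ∈ BoxProd A B ∧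
      (∀ L ∈ BoxProd A B, L ⊆ H ∩ K ↔ L ⊆ H ∧ L ⊆ K) ∧
      (∀ L ∈ BoxProd A B, BoxCl (H ∪ K) ⊆ L ↔ H ⊆ L ∧ K ⊆ L) := by
  have part1 : ∀ H ∈ BoxDot A B, BoxCl H ∈ BoxProd A B := by
    rintro H ⟨m, n, a, b, c, d, rfl⟩
    rw [boxCl_union_form a b c d]
    exact boxProd_of_fintype _ _
  refine ⟨part1, fun H hH K hK => ⟨?_, ?_, ?_, ?_⟩⟩
  · obtain ⟨m, a, b, rfl⟩ := hH
    obtain ⟨n, c, d, rfl⟩ := hK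
    have : (⋂ i, pureBox (a i) (b i)) ∩ ⋂ j, pureBox (c j) (d j)
        = ⋂ x : Fin (m + 1) ⊕ Fin (n + 1), pureBox (Sum.elim a c x) (Sum.elim b d x) := by
      rw [Set.iInter_sum]; rfl
    rw [this]
    exact boxProd_of_fintype _ _
  · exact part1 _ (union_mem_boxDot hH hK)
  · exact fun L _ => Set.subset_inter_iff
  · intro L hL
    rw [boxCl_subset_iff hL, Set.union_subset_iff]
end

section
/- Let A and B be lattices with least elements 0_A and 0_B. Then the elements of A ⊠ B are exactly the finite intersections H = ⋂_{i<n}(a_i □ b_i) with n > 0, ⟨a_i,b_i⟩ ∈ A × B, satisfying ⋀_{i<n} a_i = 0_A and ⋀_{i<n} b_i = 0_B. Furthermore, every element of A ⊠ B can be written as a finite union ⋃_{i<n}(a_i ⊠ b_i) of pure lattice tensors, and conversely the box closure of any finite union of pure lattice tensors belongs to A ⊠ B. -/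
section helpers

variable {A B : Type*} [Lattice A] [OrderBot A] [Lattice B] [OrderBot B]

lemma latTens_iff' (H : Set (A × B)) : H ∈ LatTens A B ↔
    ∃ (n : ℕ) (a : Fin (n + 1) → A) (b : Fin (n + 1) → B),
      H = ⋂ i, pureBox (a i) (b i) ∧
      Finset.univ.inf' Finset.univ_nonempty a = ⊥ ∧
      Finset.univ.inf' Finset.univ_nonempty b = ⊥ := by
  constructor
  · rintro ⟨⟨n, a, b, rfl⟩, c, d, hcd⟩
    refine ⟨n + 2, Fin.snoc (Fin.snoc a c) ⊥, Fin.snoc (Fin.snoc b ⊥) d, ?_, ?_, ?_⟩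
    · ext p
      simp only [Set.mem_iInter]
      constructor
      · intro hp i
        have hpt : p ∈ pureTens c d := hcd (Set.mem_iInter.2 hp)
        refine Fin.lastCases ?_ (fun j => ?_) i
        · simp only [pureBox, Fin.snoc_last, Set.mem_setOf_eq]
          rcases hpt with ⟨_, h2⟩ | h | h
          · exact Or.inr h2
          · exact Or.inl (h ⊥)
          · exact Or.inr (h d)
        · refine Fin.lastCases ?_ (fun k => ?_) j
          · simp only [pureBox, Fin.snoc_castSucc, Fin.snoc_last, Set.mem_setOf_eq]
            rcases hpt with ⟨h1, _⟩ | h | h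
            · exact Or.inl h1
            · exact Or.inl (h c)
            · exact Or.inr (h ⊥)
          · simpa only [pureBox, Fin.snoc_castSucc, Set.mem_setOf_eq] using hp k
      · intro hp i
        simpa only [pureBox, Fin.snoc_castSucc, Set.mem_setOf_eq] using
          hp (Fin.castSucc (Fin.castSucc i))
    · refine le_antisymm ?_ bot_le
      have := Finset.inf'_le (Fin.snoc (Fin.snoc a c) (⊥ : A)) (Finset.mem_univ (Fin.last (n + 2)))
      simpa [Fin.snoc_last] using this
    · refine le_antisymm ?_ bot_le
      have := Finset.inf'_le (Fin.snoc (Fin.snoc b (⊥ : B)) d) (Finset.mem_univ (Fin.castSucc (Fin.last (n + 1))))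
      simpa [Fin.snoc_castSucc, Fin.snoc_last] using this
  · rintro ⟨n, a, b, rfl, ha, hb⟩
    refine ⟨⟨n, a, b, rfl⟩, Finset.univ.sup a, Finset.univ.sup b, ?_⟩
    intro p hp
    rw [Set.mem_iInter] at hp
    have hp' : ∀ i, p.1 ≤ a i ∨ p.2 ≤ b i := hp
    by_cases h1 : ∀ i, p.1 ≤ a i
    · refine Or.inr (Or.inl (fun x => ?_))
      have : p.1 ≤ ⊥ := ha ▸ Finset.le_inf' _ _ (fun i _ => h1 i)
      exact this.trans bot_le
    · by_cases h2 : ∀ i, p.2 ≤ b i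
      · refine Or.inr (Or.inr (fun x => ?_))
        have : p.2 ≤ ⊥ := hb ▸ Finset.le_inf' _ _ (fun i _ => h2 i)
        exact this.trans bot_le
      · push_neg at h1 h2
        obtain ⟨i, hi⟩ := h1
        obtain ⟨j, hj⟩ := h2
        refine Or.inl ⟨?_, ?_⟩
        · exact ((hp' j).resolve_right hj).trans (Finset.le_sup (Finset.mem_univ j))
        · exact ((hp' i).resolve_left hi).trans (Finset.le_sup (Finset.mem_univ i))

end helpers

section helpers2
open Classical
variable {A B : Type*} [Lattice A] [OrderBot A] [Lattice B] [OrderBot B]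

lemma part2' (n : ℕ) (a : Fin (n + 1) → A) (b : Fin (n + 1) → B)
    (ha : Finset.univ.inf' Finset.univ_nonempty a = ⊥)
    (hb : Finset.univ.inf' Finset.univ_nonempty b = ⊥) :
    ∃ (m : ℕ) (c : Fin m → A) (d : Fin m → B),
      (⋂ i, pureBox (a i) (b i)) = ⋃ j, pureTens (c j) (d j) := by
  classical
  set c : Finset (Fin (n + 1)) → A :=
    fun S => if h : S.Nonempty then S.inf' h a else ⊥ with hc
  set d : Finset (Fin (n + 1)) → B :=
    fun S => if h : Sᶜ.Nonempty then Sᶜ.inf' h b else ⊥ with hd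
  have key : (⋂ i, pureBox (a i) (b i)) = ⋃ S : Finset (Fin (n + 1)), pureTens (c S) (d S) := by
    ext p
    simp only [Set.mem_iInter, Set.mem_iUnion]
    constructor
    · intro hp
      by_cases h1 : ∀ i, p.1 ≤ a i
      · refine ⟨∅, Or.inr (Or.inl (fun x => ?_))⟩
        have : p.1 ≤ ⊥ := ha ▸ Finset.le_inf' _ _ (fun i _ => h1 i)
        exact this.trans bot_le
      · by_cases h2 : ∀ i, p.2 ≤ b i
        · refine ⟨∅, Or.inr (Or.inr (fun x => ?_))⟩
          have : p.2 ≤ ⊥ := hb ▸ Finset.le_inf' _ _ (fun i _ => h2 i)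
          exact this.trans bot_le
        · set S := Finset.univ.filter (fun i => p.1 ≤ a i) with hS
          push_neg at h1 h2
          obtain ⟨i0, hi0⟩ := h1
          have hSne : S.Nonempty := by
            obtain ⟨j0, hj0⟩ := h2
            exact ⟨j0, Finset.mem_filter.2 ⟨Finset.mem_univ _, (hp j0).resolve_right hj0⟩⟩
          have hScne : Sᶜ.Nonempty :=
            ⟨i0, Finset.mem_compl.2 (fun h => hi0 (Finset.mem_filter.1 h).2)⟩
          refine ⟨S, Or.inl ⟨?_, ?_⟩⟩
          · rw [hc]
            simp only [dif_pos hSne]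
            exact Finset.le_inf' _ _ (fun i hi => (Finset.mem_filter.1 hi).2)
          · rw [hd]
            simp only [dif_pos hScne]
            refine Finset.le_inf' _ _ (fun i hi => ?_)
            have : ¬ p.1 ≤ a i := fun h =>
              (Finset.mem_compl.1 hi) (Finset.mem_filter.2 ⟨Finset.mem_univ _, h⟩)
            exact (hp i).resolve_left this
    · rintro ⟨S, hS | hS | hS⟩
      · intro i
        rcases hS with ⟨h1, h2⟩
        by_cases hi : i ∈ S
        · have hSne : S.Nonempty := ⟨i, hi⟩
          refine Or.inl (h1.trans ?_)
          rw [hc]; simp only [dif_pos hSne]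
          exact Finset.inf'_le _ hi
        · have hi' : i ∈ Sᶜ := Finset.mem_compl.2 hi
          have hScne : Sᶜ.Nonempty := ⟨i, hi'⟩
          refine Or.inr (h2.trans ?_)
          rw [hd]; simp only [dif_pos hScne]
          exact Finset.inf'_le _ hi'
      · exact fun i => Or.inl (hS (a i))
      · exact fun i => Or.inr (hS (b i))
  refine ⟨Fintype.card (Finset (Fin (n + 1))),
    fun j => c ((Fintype.equivFin (Finset (Fin (n + 1)))).symm j),
    fun j => d ((Fintype.equivFin (Finset (Fin (n + 1)))).symm j), ?_⟩
  rw [key]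
  exact ((Fintype.equivFin (Finset (Fin (n + 1)))).symm.surjective.iUnion_comp
    (fun S => pureTens (c S) (d S))).symm

lemma part3' (n : ℕ) (a : Fin n → A) (b : Fin n → B) :
    BoxCl (⋃ i, pureTens (a i) (b i)) ∈ LatTens A B := by
  classical
  set X := ⋃ i, pureTens (a i) (b i) with hX
  set u : Finset (Fin n) → A := fun S => S.sup a with hu
  set v : Finset (Fin n) → B := fun S => Sᶜ.sup b with hv
  have key : BoxCl X = ⋂ S : Finset (Fin n), pureBox (u S) (v S) := by
    apply Set.Subset.antisymm
    · intro p hp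
      simp only [BoxCl, Set.mem_iInter] at hp
      refine Set.mem_iInter.2 (fun S => hp (u S) (v S) ?_)
      intro q hq
      obtain ⟨i, hqi⟩ := Set.mem_iUnion.1 hq
      rcases hqi with ⟨h1, h2⟩ | h | h
      · by_cases hi : i ∈ S
        · exact Or.inl (h1.trans (Finset.le_sup hi))
        · exact Or.inr (h2.trans (Finset.le_sup (Finset.mem_compl.2 hi)))
      · exact Or.inl (h (u S))
      · exact Or.inr (h (v S))
    · intro p hp
      simp only [BoxCl, Set.mem_iInter]
      intro u0 v0 hX0
      have hkey : ∀ i, a i ≤ u0 ∨ b i ≤ v0 := fun i =>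
        hX0 (show ((a i, b i) : A × B) ∈ X from Set.mem_iUnion.2 ⟨i, Or.inl ⟨le_refl _, le_refl _⟩⟩)
      set S := Finset.univ.filter (fun i => a i ≤ u0) with hS
      have h1 : u S ≤ u0 := Finset.sup_le (fun i hi => (Finset.mem_filter.1 hi).2)
      have h2 : v S ≤ v0 := by
        refine Finset.sup_le (fun i hi => ?_)
        have : ¬ a i ≤ u0 := fun h =>
          (Finset.mem_compl.1 hi) (Finset.mem_filter.2 ⟨Finset.mem_univ _, h⟩)
        exact (hkey i).resolve_left this
      rcases Set.mem_iInter.1 hp S with h | h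
      · exact Or.inl (h.trans h1)
      · exact Or.inr (h.trans h2)
  have hcard : Fintype.card (Finset (Fin n)) = 2 ^ n - 1 + 1 := by
    rw [Nat.sub_add_cancel (Nat.one_le_two_pow)]
    simp [Fintype.card_finset]
  set e : Fin (2 ^ n - 1 + 1) ≃ Finset (Fin n) := (Fintype.equivFinOfCardEq hcard).symm with he
  rw [latTens_iff']
  refine ⟨2 ^ n - 1, fun j => u (e j), fun j => v (e j), ?_, ?_, ?_⟩
  · rw [key]
    exact (e.surjective.iInter_comp (fun S => pureBox (u S) (v S))).symm
  · refine le_antisymm ?_ bot_le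
    have := Finset.inf'_le (fun j => u (e j)) (Finset.mem_univ (e.symm ∅))
    simpa [hu, Equiv.apply_symm_apply] using this
  · refine le_antisymm ?_ bot_le
    have := Finset.inf'_le (fun j => v (e j)) (Finset.mem_univ (e.symm Finset.univ))
    simpa [hv, Equiv.apply_symm_apply] using this

end helpers2



/-- For lattices with zero: description of the elements of `A ⊠ B` as finite
intersections of pure boxes with meets of coordinates equal to zero, and as finite
unions of pure lattice tensors. -/
theorem stmt_8 {A B : Type*} [Lattice A] [OrderBot A] [Lattice B] [OrderBot B] :
    (∀ H : Set (A × B), H ∈ LatTens A B ↔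
      ∃ (n : ℕ) (a : Fin (n + 1) → A) (b : Fin (n + 1) → B),
        H = ⋂ i, pureBox (a i) (b i) ∧
        Finset.univ.inf' Finset.univ_nonempty a = ⊥ ∧
        Finset.univ.inf' Finset.univ_nonempty b = ⊥) ∧
    (∀ H ∈ LatTens A B, ∃ (n : ℕ) (a : Fin n → A) (b : Fin n → B),
      H = ⋃ i, pureTens (a i) (b i)) ∧
    ∀ (n : ℕ) (a : Fin n → A) (b : Fin n → B),
      BoxCl (⋃ i, pureTens (a i) (b i)) ∈ LatTens A B := by
  refine ⟨latTens_iff', ?_, part3'⟩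
  intro H hH
  obtain ⟨n, a, b, rfl, ha, hb⟩ := (latTens_iff' H).1 hH
  exact part2' n a b ha hb
end

section
/- Let A and B be lattices, with A bounded. Then the elements of A ⊠ B are exactly the finite intersections H = ⋂_{i<n}(a_i □ b_i) with n > 0, ⟨a_i,b_i⟩ ∈ A × B, satisfying ⋀_{i<n} a_i = 0_A. Furthermore, every element of A ⊠ B can be written as a finite union (0_A □ x) ∪ ⋃_{i<n}(a_i ∘ b_i), where x ∈ B and n ≥ 0, and conversely the box closure of any set of this form belongs to A ⊠ B. -/
section Aux

variable {A B : Type*} [Lattice A] [Lattice B]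

lemma aux_pureBox_mono {a a' : A} {b b' : B} (ha : a ≤ a') (hb : b ≤ b') :
    pureBox a b ⊆ pureBox a' b' := fun _ hp => hp.imp (le_trans · ha) (le_trans · hb)

lemma aux_subset_boxCl {X : Set (A × B)} : X ⊆ BoxCl X := fun p hp =>
  Set.mem_iInter.2 fun _ => Set.mem_iInter.2 fun _ => Set.mem_iInter.2 fun h => h hp

lemma aux_boxCl_le {X : Set (A × B)} {c : A} {d : B} (h : X ⊆ pureBox c d) :
    BoxCl X ⊆ pureBox c d := fun p hp =>
  Set.mem_iInter.1 (Set.mem_iInter.1 (Set.mem_iInter.1 hp c) d) h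

/-- `Sᶜ.inf' b` with default value `x` when `Sᶜ` is empty. -/
noncomputable def auxInf (x : B) {n : ℕ} (b : Fin n → B) (S : Finset (Fin n)) : B :=
  if h : Sᶜ.Nonempty then Sᶜ.inf' h b else x

/-- `x ⊔ Tᶜ.sup' b` with default value `x` when `Tᶜ` is empty. -/
noncomputable def auxSup (x : B) {n : ℕ} (b : Fin n → B) (T : Finset (Fin n)) : B :=
  if h : Tᶜ.Nonempty then x ⊔ Tᶜ.sup' h b else x

end Aux

section AuxBdd

variable {A B : Type*} [Lattice A] [BoundedOrder A] [Lattice B]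

lemma aux_sub_box_iff {x : B} {n : ℕ} {a : Fin n → A} {b : Fin n → B} {c : A} {d : B} :
    (pureBox (⊥ : A) x ∪ ⋃ i, pureCirc (a i) (b i)) ⊆ pureBox c d ↔
      ((⊤ : A) ≤ c ∨ x ≤ d) ∧ ∀ i, a i ≤ c ∨ b i ≤ d := by
  constructor
  · intro h
    refine ⟨?_, fun i => ?_⟩
    · exact h (Set.mem_union_left _ (Or.inr (le_refl x) :
        ((⊤ : A), x) ∈ pureBox (⊥ : A) x))
    · exact h (show ((a i, b i) : A × B) ∈ _ from
        Set.mem_union_right _ (Set.mem_iUnion.2 ⟨i, ⟨le_rfl, le_rfl⟩⟩))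
  · rintro ⟨h1, h2⟩ p hp
    rcases hp with hp | hp
    · rcases hp with hp | hp
      · exact Or.inl (hp.trans bot_le)
      · rcases h1 with h1 | h1
        · exact Or.inl (le_top.trans h1)
        · exact Or.inr (hp.trans h1)
    · obtain ⟨i, hi⟩ := Set.mem_iUnion.1 hp
      rcases h2 i with h | h
      · exact Or.inl (hi.1.trans h)
      · exact Or.inr (hi.2.trans h)

lemma aux_boxCl_eq (x : B) {n : ℕ} (a : Fin n → A) (b : Fin n → B) :
    BoxCl (pureBox (⊥ : A) x ∪ ⋃ i, pureCirc (a i) (b i)) =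
      ⋂ T : Finset (Fin n), pureBox (T.sup a) (auxSup x b T) := by
  classical
  have hmem : ∀ T : Finset (Fin n),
      (pureBox (⊥ : A) x ∪ ⋃ i, pureCirc (a i) (b i)) ⊆
        pureBox (T.sup a) (auxSup x b T) := by
    intro T
    refine aux_sub_box_iff.2 ⟨Or.inr ?_, fun i => ?_⟩
    · unfold auxSup; split
      · exact le_sup_left
      · exact le_rfl
    · by_cases hiT : i ∈ T
      · exact Or.inl (Finset.le_sup hiT)
      · refine Or.inr ?_
        have hne : Tᶜ.Nonempty := ⟨i, Finset.mem_compl.2 hiT⟩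
        rw [show auxSup x b T = x ⊔ Tᶜ.sup' hne b from dif_pos hne]
        exact (Finset.le_sup' b (Finset.mem_compl.2 hiT)).trans le_sup_right
  apply subset_antisymm
  · exact Set.subset_iInter fun T => aux_boxCl_le (hmem T)
  · intro p hp
    refine Set.mem_iInter.2 fun c => Set.mem_iInter.2 fun d =>
      Set.mem_iInter.2 fun hcd => ?_
    obtain ⟨h1, h2⟩ := aux_sub_box_iff.1 hcd
    rcases h1 with h1 | h1
    · exact Or.inl (le_top.trans h1)
    · set T := Finset.univ.filter (fun i => a i ≤ c) with hT
      have hpT : p ∈ pureBox (T.sup a) (auxSup x b T) := Set.mem_iInter.1 hp T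
      refine aux_pureBox_mono ?_ ?_ hpT
      · exact Finset.sup_le fun i hi => (Finset.mem_filter.1 hi).2
      · unfold auxSup; split
        · refine sup_le h1 (Finset.sup'_le _ _ fun i hi => ?_)
          refine (h2 i).resolve_left ?_
          have := Finset.mem_compl.1 hi
          simpa [hT] using this
        · exact h1

end AuxBdd

/-- For `A` bounded: description of the elements of `A ⊠ B` as finite intersections
of pure boxes whose first coordinates meet to zero, and as finite unions
`(0_A □ x) ∪ ⋃ (a_i ∘ b_i)`. -/
theorem stmt_9 {A B : Type*} [Lattice A] [BoundedOrder A] [Lattice B] :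
    (∀ H : Set (A × B), H ∈ LatTens A B ↔
      ∃ (n : ℕ) (a : Fin (n + 1) → A) (b : Fin (n + 1) → B),
        H = ⋂ i, pureBox (a i) (b i) ∧
        Finset.univ.inf' Finset.univ_nonempty a = ⊥) ∧
    (∀ H ∈ LatTens A B, ∃ (x : B) (n : ℕ) (a : Fin n → A) (b : Fin n → B),
      H = pureBox (⊥ : A) x ∪ ⋃ i, pureCirc (a i) (b i)) ∧
    ∀ (x : B) (n : ℕ) (a : Fin n → A) (b : Fin n → B),
      BoxCl (pureBox (⊥ : A) x ∪ ⋃ i, pureCirc (a i) (b i)) ∈ LatTens A B := by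
  classical
  have h1 : ∀ H : Set (A × B), H ∈ LatTens A B ↔
      ∃ (n : ℕ) (a : Fin (n + 1) → A) (b : Fin (n + 1) → B),
        H = ⋂ i, pureBox (a i) (b i) ∧
        Finset.univ.inf' Finset.univ_nonempty a = ⊥ := by
    intro H
    constructor
    · rintro ⟨⟨n, a, b, rfl⟩, c, d, hcd⟩
      refine ⟨n + 1, Fin.snoc a ⊥, Fin.snoc b d, ?_, ?_⟩
      · have hsub : (⋂ i, pureBox (a i) (b i)) ⊆ pureBox (⊥ : A) d := by
          intro p hp
          rcases hcd hp with h | h | h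
          · exact Or.inr h.2
          · exact Or.inl (h ⊥)
          · exact Or.inr (h d)
        ext p
        simp only [Set.mem_iInter]
        constructor
        · intro hp i
          refine Fin.lastCases ?_ (fun j => ?_) i
          · rw [Fin.snoc_last, Fin.snoc_last]
            exact hsub (Set.mem_iInter.2 hp)
          · rw [Fin.snoc_castSucc, Fin.snoc_castSucc]
            exact hp j
        · intro hp i
          have := hp i.castSucc
          rwa [Fin.snoc_castSucc, Fin.snoc_castSucc] at this
      · refine le_antisymm
          ((Finset.inf'_le _ (Finset.mem_univ (Fin.last (n + 1)))).trans ?_) bot_le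
        exact le_of_eq (Fin.snoc_last _ _)
    · rintro ⟨n, a, b, rfl, hinf⟩
      refine ⟨⟨n, a, b, rfl⟩, ⊤, Finset.univ.sup' Finset.univ_nonempty b,
        fun p hp => ?_⟩
      by_cases h : ∀ i, p.1 ≤ a i
      · refine Or.inr (Or.inl fun q => ?_)
        have hb : p.1 ≤ Finset.univ.inf' Finset.univ_nonempty a :=
          Finset.le_inf' _ _ fun i _ => h i
        rw [hinf] at hb
        exact hb.trans bot_le
      · push_neg at h
        obtain ⟨i, hi⟩ := h
        rcases Set.mem_iInter.1 hp i with h' | h'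
        · exact absurd h' hi
        · exact Or.inl ⟨le_top, h'.trans (Finset.le_sup' b (Finset.mem_univ i))⟩
  refine ⟨h1, ?_, ?_⟩
  · intro H hH
    obtain ⟨n, a, b, rfl, hinf⟩ := (h1 _).1 hH
    set x := Finset.univ.inf' Finset.univ_nonempty b with hx
    set m := Fintype.card (Finset (Fin (n + 1))) with hm
    let e : Fin m ≃ Finset (Fin (n + 1)) := (Fintype.equivFin _).symm
    refine ⟨x, m, fun j => (e j).inf a, fun j => auxInf x b (e j), ?_⟩
    have key : (⋂ i, pureBox (a i) (b i)) =
        pureBox (⊥ : A) x ∪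
          ⋃ S : Finset (Fin (n + 1)), pureCirc (S.inf a) (auxInf x b S) := by
      apply subset_antisymm
      · intro p hp
        have hp' : ∀ i, p.1 ≤ a i ∨ p.2 ≤ b i := fun i => Set.mem_iInter.1 hp i
        by_cases hall : ∀ i, p.1 ≤ a i
        · refine Or.inl (Or.inl ?_)
          have hb : p.1 ≤ Finset.univ.inf' Finset.univ_nonempty a :=
            Finset.le_inf' _ _ fun i _ => hall i
          rwa [hinf] at hb
        · push_neg at hall
          obtain ⟨i0, hi0⟩ := hall
          set S := Finset.univ.filter (fun i => p.1 ≤ a i) with hS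
          refine Or.inr (Set.mem_iUnion.2 ⟨S, ?_, ?_⟩)
          · exact Finset.le_inf fun i hi => (Finset.mem_filter.1 hi).2
          · have hne : Sᶜ.Nonempty := ⟨i0, Finset.mem_compl.2 (by simp [hS, hi0])⟩
            rw [show auxInf x b S = Sᶜ.inf' hne b from dif_pos hne]
            refine Finset.le_inf' _ _ fun i hi => ?_
            refine (hp' i).resolve_left ?_
            have := Finset.mem_compl.1 hi
            simpa [hS] using this
      · intro p hp
        refine Set.mem_iInter.2 fun i => ?_
        rcases hp with hp | hp
        · rcases hp with hp | hp
          · exact Or.inl (hp.trans bot_le)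
          · exact Or.inr (hp.trans (Finset.inf'_le _ (Finset.mem_univ i)))
        · obtain ⟨S, hS⟩ := Set.mem_iUnion.1 hp
          by_cases hiS : i ∈ S
          · exact Or.inl (hS.1.trans (Finset.inf_le hiS))
          · have hne : Sᶜ.Nonempty := ⟨i, Finset.mem_compl.2 hiS⟩
            have hb := hS.2
            rw [show auxInf x b S = Sᶜ.inf' hne b from dif_pos hne] at hb
            exact Or.inr (hb.trans (Finset.inf'_le _ (Finset.mem_compl.2 hiS)))
    rw [key]
    congr 1
    ext p
    simp only [Set.mem_iUnion]
    constructor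
    · rintro ⟨S, hS⟩
      exact ⟨e.symm S, by simpa using hS⟩
    · rintro ⟨j, hj⟩
      exact ⟨e j, hj⟩
  · intro x n a b
    constructor
    · have hcard : 0 < Fintype.card (Finset (Fin n)) := Fintype.card_pos
      obtain ⟨m, hm⟩ : ∃ m, Fintype.card (Finset (Fin n)) = m + 1 :=
        ⟨_, (Nat.succ_pred_eq_of_pos hcard).symm⟩
      let e : Fin (m + 1) ≃ Finset (Fin n) :=
        (finCongr hm.symm).trans (Fintype.equivFin _).symm
      refine ⟨m, fun i => (e i).sup a, fun i => auxSup x b (e i), ?_⟩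
      rw [aux_boxCl_eq]
      ext p
      simp only [Set.mem_iInter]
      constructor
      · intro h i
        exact h (e i)
      · intro h T
        have := h (e.symm T)
        simpa using this
    · refine ⟨⊤, auxSup x b (∅ : Finset (Fin n)), fun p hp => ?_⟩
      have h0 : p ∈ pureBox ((∅ : Finset (Fin n)).sup a) (auxSup x b ∅) := by
        rw [aux_boxCl_eq] at hp
        exact Set.mem_iInter.1 hp ∅
      rcases h0 with h0 | h0
      · have hb : p.1 ≤ (⊥ : A) := by simpa using h0
        exact Or.inr (Or.inl fun q => hb.trans bot_le)
      · exact Or.inl ⟨le_top, h0⟩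
end

section
/- Let A and B be lattices with least elements, let n be a positive integer, let a_0,…,a_{n−1} ∈ A and b_0,…,b_{n−1} ∈ B. Then the box closure of H = ⋃_{i<n}(a_i ⊠ b_i) is given by BoxCl(H) = ⋃_{𝔠 ∈ F_D(n)} ( P_𝔠(a_0,…,a_{n−1}) ⊠ P_{𝔠*}(b_0,…,b_{n−1}) ). -/
/-- `F_D(n)`: the upper subsets `𝔠` of the powerset of `n` with `∅ ∉ 𝔠` and `n ∈ 𝔠`. -/
def FD (n : ℕ) : Set (Finset (Finset (Fin n))) :=
  {c | (∀ X ∈ c, ∀ Y : Finset (Fin n), X ⊆ Y → Y ∈ c) ∧ ∅ ∉ c ∧ Finset.univ ∈ c}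

/-- `𝔠* = {X ⊆ n : n − X ∉ 𝔠}`. -/
def cstar {n : ℕ} (c : Finset (Finset (Fin n))) : Finset (Finset (Fin n)) :=
  Finset.univ.filter fun X => Xᶜ ∉ c

/-- The lattice polynomial `P_𝔠(x) = ⋀_{X ∈ 𝔠} ⋁_{i ∈ X} x_i` (with value `⊥` in the
irrelevant case `𝔠 = ∅`). -/
def Pc {L : Type*} [Lattice L] [OrderBot L] {n : ℕ}
    (c : Finset (Finset (Fin n))) (x : Fin n → L) : L :=
  if h : c.Nonempty then c.inf' h fun X => X.sup x else ⊥

/-- The box closure of a finite union of pure lattice tensors, computed by the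
free-distributive-lattice formula. -/
theorem stmt_12 {A B : Type*} [Lattice A] [OrderBot A] [Lattice B] [OrderBot B]
    (n : ℕ) (a : Fin (n + 1) → A) (b : Fin (n + 1) → B) :
    BoxCl (⋃ i, pureTens (a i) (b i)) =
      ⋃ c ∈ FD (n + 1), pureTens (Pc c a) (Pc (cstar c) b) := by
  classical
  ext p
  obtain ⟨x, y⟩ := p
  have hsub : ∀ u v, ((⋃ i, pureTens (a i) (b i)) ⊆ pureBox u v ↔ ∀ i, a i ≤ u ∨ b i ≤ v) := by
    intro u v
    constructor
    · intro h i
      exact h (show (a i, b i) ∈ _ from Set.mem_iUnion.2 ⟨i, Or.inl ⟨le_refl _, le_refl _⟩⟩)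
    · intro h q hq
      obtain ⟨i, hi⟩ := Set.mem_iUnion.1 hq
      rcases hi with ⟨h1, h2⟩ | (hb | hb)
      · rcases h i with hu | hv
        · exact Or.inl (h1.trans hu)
        · exact Or.inr (h2.trans hv)
      · exact Or.inl (hb u)
      · exact Or.inr (hb v)
  have hmemT : ∀ (u : A) (v : B), ((x, y) ∈ pureTens u v ↔ (x ≤ u ∧ y ≤ v) ∨ IsBot x ∨ IsBot y) :=
    fun u v => Iff.rfl
  constructor
  · intro hcl
    simp only [BoxCl, Set.mem_iInter] at hcl
    have hcl' : ∀ u v, (∀ i, a i ≤ u ∨ b i ≤ v) → (x ≤ u ∨ y ≤ v) := by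
      intro u v h
      exact hcl u v ((hsub u v).2 h)
    simp only [Set.mem_iUnion]
    by_cases hbot : IsBot x ∨ IsBot y
    · refine ⟨{Finset.univ}, ⟨?_, ?_, Finset.mem_singleton_self _⟩, Or.inr hbot⟩
      · intro X hX Y hXY
        rw [Finset.mem_singleton] at hX
        rw [Finset.mem_singleton]
        exact le_antisymm (Finset.subset_univ Y) (hX ▸ hXY)
      · intro h
        rw [Finset.mem_singleton] at h
        exact (Finset.univ_nonempty.ne_empty h.symm) 
    push_neg at hbot
    obtain ⟨hx, hy⟩ := hbot
    simp only [IsBot, not_forall] at hx hy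
    obtain ⟨v₀, hv₀⟩ := hy
    obtain ⟨u₀, hu₀⟩ := hx
    set c : Finset (Finset (Fin (n+1))) := Finset.univ.filter (fun X => x ≤ X.sup a) with hc
    have hmemc : ∀ X, X ∈ c ↔ x ≤ X.sup a := by
      intro X; simp [hc]
    have hempty : (∅ : Finset (Fin (n+1))) ∉ c := by
      rw [hmemc]
      intro h
      exact hu₀ (h.trans bot_le)
    have huniv : Finset.univ ∈ c := by
      rw [hmemc]
      rcases hcl' (Finset.univ.sup a) v₀ (fun i => Or.inl (Finset.le_sup (Finset.mem_univ i))) with h | h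
      · exact h
      · exact absurd h hv₀
    have hFD : c ∈ FD (n + 1) := by
      refine ⟨?_, hempty, huniv⟩
      intro X hX Y hXY
      rw [hmemc] at hX ⊢
      exact hX.trans (Finset.sup_mono hXY)
    have hcne : c.Nonempty := ⟨_, huniv⟩
    have hcsne : (cstar c).Nonempty := by
      refine ⟨Finset.univ, ?_⟩
      simp only [cstar, Finset.mem_filter, Finset.mem_univ, true_and, Finset.compl_univ]
      exact hempty
    refine ⟨c, hFD, Or.inl ⟨?_, ?_⟩⟩
    · rw [Pc, dif_pos hcne]
      rw [Finset.le_inf'_iff]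
      intro X hX
      exact (hmemc X).1 hX
    · rw [Pc, dif_pos hcsne]
      rw [Finset.le_inf'_iff]
      intro X hX
      simp only [cstar, Finset.mem_filter, Finset.mem_univ, true_and] at hX
      rw [hmemc] at hX
      have hcond : ∀ i, a i ≤ Xᶜ.sup a ∨ b i ≤ X.sup b := by
        intro i
        by_cases hi : i ∈ X
        · exact Or.inr (Finset.le_sup hi)
        · exact Or.inl (Finset.le_sup (Finset.mem_compl.2 hi))
      rcases hcl' (Xᶜ.sup a) (X.sup b) hcond with h | h
      · exact absurd h hX
      · exact h
  · intro hmem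
    simp only [Set.mem_iUnion] at hmem
    obtain ⟨c, hFD, hp⟩ := hmem
    simp only [BoxCl, Set.mem_iInter]
    intro u v hsubuv
    have hbox : ∀ i, a i ≤ u ∨ b i ≤ v := (hsub u v).1 hsubuv
    rcases hp with ⟨hxa, hyb⟩ | (hb | hb)
    · obtain ⟨hup, hne, hun⟩ := hFD
      have hcne : c.Nonempty := ⟨_, hun⟩
      have hcsne : (cstar c).Nonempty := by
        refine ⟨Finset.univ, ?_⟩
        simp only [cstar, Finset.mem_filter, Finset.mem_univ, true_and, Finset.compl_univ]
        exact hne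
      rw [Pc, dif_pos hcne] at hxa
      rw [Pc, dif_pos hcsne] at hyb
      set S : Finset (Fin (n+1)) := Finset.univ.filter (fun i => a i ≤ u) with hS
      by_cases hSc : S ∈ c
      · left
        refine le_trans hxa (le_trans (Finset.inf'_le _ hSc) (Finset.sup_le ?_))
        intro i hi
        simp only [hS, Finset.mem_filter] at hi
        exact hi.2
      · right
        have hScs : Sᶜ ∈ cstar c := by
          simp only [cstar, Finset.mem_filter, Finset.mem_univ, true_and, compl_compl]
          exact hSc
        refine le_trans hyb (le_trans (Finset.inf'_le _ hScs) (Finset.sup_le ?_))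
        intro i hi
        rw [Finset.mem_compl] at hi
        rcases hbox i with h | h
        · exact absurd (by simp [hS, h]) hi
        · exact h
    · exact Or.inl (hb u)
    · exact Or.inr (hb v)
end

section
/- Let A and B be lattices with least elements, let a_0, a_1 ∈ A and b_0, b_1 ∈ B. Then (a_0 ⊠ b_0) ∩ (a_1 ⊠ b_1) = (a_0 ∧ a_1) ⊠ (b_0 ∧ b_1), and the join in A ⊠ B satisfies (a_0 ⊠ b_0) ∨ (a_1 ⊠ b_1) = (a_0 ⊠ b_0) ∪ (a_1 ⊠ b_1) ∪ ((a_0 ∨ a_1) ⊠ (b_0 ∧ b_1)) ∪ ((a_0 ∧ a_1) ⊠ (b_0 ∨ b_1)). In particular, if a_0 ≤ a_1 and b_0 ≥ b_1, or a_0 ≥ a_1 and b_0 ≤ b_1, then (a_0 ⊠ b_0) ∨ (a_1 ⊠ b_1) = (a_0 ⊠ b_0) ∪ (a_1 ⊠ b_1). -/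
lemma tens_sub_box {A B : Type*} [Lattice A] [Lattice B] {a u : A} {b v : B}
    (h : a ≤ u ∨ b ≤ v) : pureTens a b ⊆ pureBox u v := by
  rintro ⟨x, y⟩ (⟨hx, hy⟩ | hb | hb)
  · rcases h with h | h
    · exact Or.inl (hx.trans h)
    · exact Or.inr (hy.trans h)
  · exact Or.inl (hb u)
  · exact Or.inr (hb v)

lemma self_mem_tens {A B : Type*} [Lattice A] [Lattice B] (a : A) (b : B) :
    (a, b) ∈ pureTens a b := Or.inl ⟨le_rfl, le_rfl⟩

lemma mem_BoxCl {A B : Type*} [Lattice A] [Lattice B] {X : Set (A × B)} {p : A × B} :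
    p ∈ BoxCl X ↔ ∀ u v, X ⊆ pureBox u v → p ∈ pureBox u v := by
  simp [BoxCl]

lemma tens_sub_BoxCl {A B : Type*} [Lattice A] [Lattice B] {X : Set (A × B)} {a : A} {b : B}
    (h : ∀ u v, X ⊆ pureBox u v → a ≤ u ∨ b ≤ v) : pureTens a b ⊆ BoxCl X := by
  intro p hp
  rw [mem_BoxCl]
  intro u v hX
  exact tens_sub_box (h u v hX) hp

/-- Arithmetic of pure lattice tensors: meet and join formulas in `A ⊠ B`
(where the join of `H` and `K` is `BoxCl (H ∪ K)`). -/
theorem stmt_13 {A B : Type*} [Lattice A] [OrderBot A] [Lattice B] [OrderBot B]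
    (a₀ a₁ : A) (b₀ b₁ : B) :
    (pureTens a₀ b₀ ∩ pureTens a₁ b₁ = pureTens (a₀ ⊓ a₁) (b₀ ⊓ b₁)) ∧
    (BoxCl (pureTens a₀ b₀ ∪ pureTens a₁ b₁) =
      pureTens a₀ b₀ ∪ pureTens a₁ b₁ ∪ pureTens (a₀ ⊔ a₁) (b₀ ⊓ b₁) ∪
        pureTens (a₀ ⊓ a₁) (b₀ ⊔ b₁)) ∧
    ((a₀ ≤ a₁ ∧ b₁ ≤ b₀) ∨ (a₁ ≤ a₀ ∧ b₀ ≤ b₁) →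
      BoxCl (pureTens a₀ b₀ ∪ pureTens a₁ b₁) = pureTens a₀ b₀ ∪ pureTens a₁ b₁) := by
  have key : BoxCl (pureTens a₀ b₀ ∪ pureTens a₁ b₁) =
      pureTens a₀ b₀ ∪ pureTens a₁ b₁ ∪ pureTens (a₀ ⊔ a₁) (b₀ ⊓ b₁) ∪
        pureTens (a₀ ⊓ a₁) (b₀ ⊔ b₁) := by
    apply Set.Subset.antisymm
    · intro p hp
      rw [mem_BoxCl] at hp
      have sub : ∀ (u : A) (v : B), (a₀ ≤ u ∨ b₀ ≤ v) → (a₁ ≤ u ∨ b₁ ≤ v) →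
          pureTens a₀ b₀ ∪ pureTens a₁ b₁ ⊆ pureBox u v := fun u v h0 h1 =>
        Set.union_subset (tens_sub_box h0) (tens_sub_box h1)
      have h1 := hp (a₀ ⊔ a₁) ⊥ (sub _ _ (Or.inl le_sup_left) (Or.inl le_sup_right))
      have h2 := hp ⊥ (b₀ ⊔ b₁) (sub _ _ (Or.inr le_sup_left) (Or.inr le_sup_right))
      have h3 := hp a₀ b₁ (sub _ _ (Or.inl le_rfl) (Or.inr le_rfl))
      have h4 := hp a₁ b₀ (sub _ _ (Or.inr le_rfl) (Or.inl le_rfl))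
      obtain ⟨x, y⟩ := p
      have hbx : x ≤ ⊥ → IsBot x := fun h z => h.trans bot_le
      have hby : y ≤ ⊥ → IsBot y := fun h z => h.trans bot_le
      rcases h1 with h1 | h1
      · rcases h2 with h2 | h2
        · exact Or.inl (Or.inl (Or.inl (Or.inr (Or.inl (hbx h2)))))
        · rcases h3 with h3 | h3
          · rcases h4 with h4 | h4
            · exact Or.inr (Or.inl ⟨le_inf h3 h4, h2⟩)
            · exact Or.inl (Or.inl (Or.inl (Or.inl ⟨h3, h4⟩)))
          · rcases h4 with h4 | h4
            · exact Or.inl (Or.inl (Or.inr (Or.inl ⟨h4, h3⟩)))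
            · exact Or.inl (Or.inr (Or.inl ⟨h1, le_inf h4 h3⟩))
      · exact Or.inl (Or.inl (Or.inl (Or.inr (Or.inr (hby h1)))))
    · have mem : ∀ (u : A) (v : B),
          pureTens a₀ b₀ ∪ pureTens a₁ b₁ ⊆ pureBox u v →
          (a₀ ≤ u ∨ b₀ ≤ v) ∧ (a₁ ≤ u ∨ b₁ ≤ v) := by
        intro u v h
        exact ⟨h (Or.inl (self_mem_tens a₀ b₀)), h (Or.inr (self_mem_tens a₁ b₁))⟩
      have base : pureTens a₀ b₀ ∪ pureTens a₁ b₁ ⊆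
          BoxCl (pureTens a₀ b₀ ∪ pureTens a₁ b₁) := by
        intro p hp
        rw [mem_BoxCl]
        exact fun u v h => h hp
      refine Set.union_subset (Set.union_subset base ?_) ?_
      · apply tens_sub_BoxCl
        intro u v h
        obtain ⟨h0, h1⟩ := mem u v h
        rcases h0 with h0 | h0
        · rcases h1 with h1 | h1
          · exact Or.inl (sup_le h0 h1)
          · exact Or.inr (inf_le_right.trans h1)
        · exact Or.inr (inf_le_left.trans h0)
      · apply tens_sub_BoxCl
        intro u v h
        obtain ⟨h0, h1⟩ := mem u v h
        rcases h0 with h0 | h0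
        · exact Or.inl (inf_le_left.trans h0)
        · rcases h1 with h1 | h1
          · exact Or.inl (inf_le_right.trans h1)
          · exact Or.inr (sup_le h0 h1)
  refine ⟨?_, key, ?_⟩
  · ext ⟨x, y⟩
    simp only [Set.mem_inter_iff, pureTens, pureCirc, Set.mem_union, Set.mem_setOf_eq,
      le_inf_iff]
    tauto
  · rintro (⟨ha, hb⟩ | ⟨ha, hb⟩) <;> rw [key]
    · rw [sup_eq_right.mpr ha, inf_eq_right.mpr hb, inf_eq_left.mpr ha, sup_eq_left.mpr hb,
        Set.union_assoc, Set.union_assoc]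
      simp [Set.union_comm, Set.union_left_comm]
    · rw [sup_eq_left.mpr ha, inf_eq_left.mpr hb, inf_eq_right.mpr ha, sup_eq_right.mpr hb,
        Set.union_assoc, Set.union_assoc]
      simp [Set.union_comm, Set.union_left_comm]
end

section
/- Let A and B be lattices with least elements, and suppose that A or B is distributive. Then the semilattice tensor product and the lattice tensor product coincide: A ⊗ B = A ⊠ B. That is, a subset H of A × B belongs to A ⊠ B if and only if H is the smallest bi-ideal of A × B containing ⋃_{i<n}(a_i ∘ b_i) for some n > 0 and some ⟨a_i,b_i⟩ ∈ A × B (i < n). -/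
/-- A bi-ideal of `A × B` (for lattices with zero). -/
def IsBiIdeal {A B : Type*} [Lattice A] [OrderBot A] [Lattice B] [OrderBot B]
    (H : Set (A × B)) : Prop :=
  (∀ a : A, (a, (⊥ : B)) ∈ H) ∧ (∀ b : B, ((⊥ : A), b) ∈ H) ∧
  (∀ p q : A × B, q.1 ≤ p.1 → q.2 ≤ p.2 → p ∈ H → q ∈ H) ∧
  (∀ (a₀ a₁ : A) (b : B), (a₀, b) ∈ H → (a₁, b) ∈ H → (a₀ ⊔ a₁, b) ∈ H) ∧
  (∀ (a : A) (b₀ b₁ : B), (a, b₀) ∈ H → (a, b₁) ∈ H → (a, b₀ ⊔ b₁) ∈ H)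

/-- The semilattice tensor product `A ⊗ B`: the bi-ideals of `A × B` that are the
smallest bi-ideal containing some finite union of pure tensors. -/
def TensProd (A B : Type*) [Lattice A] [OrderBot A] [Lattice B] [OrderBot B] :
    Set (Set (A × B)) :=
  {H | IsBiIdeal H ∧ ∃ (n : ℕ) (a : Fin (n + 1) → A) (b : Fin (n + 1) → B),
    (⋃ i, pureCirc (a i) (b i)) ⊆ H ∧
    ∀ K : Set (A × B), IsBiIdeal K → (⋃ i, pureCirc (a i) (b i)) ⊆ K → H ⊆ K}

section helpers
variable {A B : Type*} [Lattice A] [OrderBot A] [Lattice B] [OrderBot B]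

lemma biIdeal_supFst {K : Set (A × B)} (hK : IsBiIdeal K) {ι : Type*} [DecidableEq ι]
    (T : Finset ι) (f : ι → A) (y : B) (h : ∀ i ∈ T, (f i, y) ∈ K) : (T.sup f, y) ∈ K := by
  induction T using Finset.induction_on with
  | empty => simpa using hK.2.1 y
  | @insert i T hi ih =>
      rw [Finset.sup_insert]
      exact hK.2.2.2.1 _ _ _ (h i (Finset.mem_insert_self _ _))
        (ih fun j hj => h j (Finset.mem_insert_of_mem hj))

lemma biIdeal_supSnd {K : Set (A × B)} (hK : IsBiIdeal K) {ι : Type*} [DecidableEq ι]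
    (T : Finset ι) (g : ι → B) (x : A) (h : ∀ i ∈ T, (x, g i) ∈ K) : (x, T.sup g) ∈ K := by
  induction T using Finset.induction_on with
  | empty => simpa using hK.1 x
  | @insert i T hi ih =>
      rw [Finset.sup_insert]
      exact hK.2.2.2.2 _ _ _ (h i (Finset.mem_insert_self _ _))
        (ih fun j hj => h j (Finset.mem_insert_of_mem hj))

lemma isBiIdeal_iInter_pureBox {ι : Sort*} (a : ι → A) (b : ι → B) :
    IsBiIdeal (⋂ i, pureBox (a i) (b i)) := by
  refine ⟨fun x => ?_, fun y => ?_, fun p q h1 h2 hp => ?_, fun a₀ a₁ y h0 h1 => ?_,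
    fun x b₀ b₁ h0 h1 => ?_⟩ <;>
    simp only [Set.mem_iInter, pureBox, Set.mem_setOf_eq] at * <;> intro i
  · exact Or.inr bot_le
  · exact Or.inl bot_le
  · rcases hp i with h | h
    · exact Or.inl (le_trans h1 h)
    · exact Or.inr (le_trans h2 h)
  · rcases h0 i with h | h
    · rcases h1 i with h' | h'
      · exact Or.inl (sup_le h h')
      · exact Or.inr h'
    · exact Or.inr h
  · rcases h0 i with h | h
    · exact Or.inl h
    · rcases h1 i with h' | h'
      · exact Or.inl h'
      · exact Or.inr (sup_le h h')

end helpers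
lemma distribKey {A : Type*} [DistribLattice A] [OrderBot A]
    {ι : Type*} [Fintype ι] [DecidableEq ι] (a : ι → A) (x : A)
    (hx : x ≤ Finset.univ.sup a) :
    ∀ F : Finset (Finset ι), (∀ T ∈ F, x ≤ T.sup a) →
    x ≤ (Finset.univ.filter
        (fun R : Finset ι => R.Nonempty ∧ ∀ T ∈ F, (R ∩ T).Nonempty)).sup
      (fun R => x ⊓ (if h : R.Nonempty then R.inf' h a else ⊥)) := by
  classical
  intro F
  induction F using Finset.induction_on with
  | empty =>
      intro _
      calc x = x ⊓ Finset.univ.sup a := (inf_eq_left.mpr hx).symm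
        _ = Finset.univ.sup (fun i => x ⊓ a i) := Finset.sup_inf_distrib_left _ _ _
        _ ≤ _ := by
            refine Finset.sup_le fun i _ => ?_
            refine le_trans ?_ (Finset.le_sup (f := fun R : Finset ι => x ⊓ (if h : R.Nonempty then R.inf' h a else ⊥))
              (Finset.mem_filter.mpr ⟨Finset.mem_univ _,
                Finset.singleton_nonempty i, fun T hT => absurd hT (Finset.notMem_empty T)⟩))
            simp only [dif_pos (Finset.singleton_nonempty i), Finset.inf'_singleton]
            exact le_rfl
  | @insert T F' hT ih =>
      intro hF
      have hxT : x ≤ T.sup a := hF T (Finset.mem_insert_self _ _)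
      refine le_trans (ih fun T' h' => hF T' (Finset.mem_insert_of_mem h')) ?_
      refine Finset.sup_le fun R hR => ?_
      obtain ⟨-, hRne, hRmeet⟩ := Finset.mem_filter.mp hR
      rw [dif_pos hRne]
      have h1 : x ⊓ R.inf' hRne a ≤ T.sup a := le_trans inf_le_left hxT
      calc x ⊓ R.inf' hRne a = (x ⊓ R.inf' hRne a) ⊓ T.sup a := (inf_eq_left.mpr h1).symm
        _ = T.sup (fun i => (x ⊓ R.inf' hRne a) ⊓ a i) := Finset.sup_inf_distrib_left _ _ _
        _ ≤ _ := by
            refine Finset.sup_le fun i hi => ?_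
            have hmem : insert i R ∈ Finset.univ.filter
                (fun R : Finset ι => R.Nonempty ∧ ∀ T' ∈ insert T F', (R ∩ T').Nonempty) := by
              refine Finset.mem_filter.mpr ⟨Finset.mem_univ _, Finset.insert_nonempty _ _, ?_⟩
              intro T' hT'
              rcases Finset.mem_insert.mp hT' with rfl | hT'
              · exact ⟨i, Finset.mem_inter.mpr ⟨Finset.mem_insert_self _ _, hi⟩⟩
              · exact (hRmeet T' hT').mono
                  (Finset.inter_subset_inter (Finset.subset_insert _ _) le_rfl)
            refine le_trans ?_ (Finset.le_sup (f := fun R : Finset ι => x ⊓ (if h : R.Nonempty then R.inf' h a else ⊥)) hmem)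
            simp only [dif_pos (Finset.insert_nonempty i R), Finset.inf'_insert hRne]
            exact le_inf (le_trans inf_le_left inf_le_left)
              (le_inf inf_le_right (le_trans inf_le_left inf_le_right))

lemma coreA {A B : Type*} [Lattice A] [OrderBot A] [Lattice B] [OrderBot B]
    (hd : ∀ x y z : A, x ⊓ (y ⊔ z) ≤ x ⊓ y ⊔ x ⊓ z)
    {ι : Type*} [Fintype ι] [DecidableEq ι] (a : ι → A) (b : ι → B)
    {K : Set (A × B)} (hK : IsBiIdeal K) (hgen : ∀ i, pureCirc (a i) (b i) ⊆ K)
    {x : A} {y : B} (hbox : ∀ S : Finset ι, x ≤ S.sup a ∨ y ≤ Sᶜ.sup b) :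
    (x, y) ∈ K := by
  classical
  by_cases hy : y ≤ ⊥
  · exact hK.2.2.1 (x, ⊥) (x, y) le_rfl hy (hK.1 x)
  have hx : x ≤ Finset.univ.sup a := by
    rcases hbox Finset.univ with h | h
    · exact h
    · rw [Finset.compl_univ, Finset.sup_empty] at h
      exact absurd h hy
  letI : DistribLattice A := DistribLattice.ofInfSupLe hd
  set F : Finset (Finset ι) := Finset.univ.filter (fun S : Finset ι => ¬ y ≤ Sᶜ.sup b) with hFdef
  have hF : ∀ T ∈ F, x ≤ T.sup a := fun T hT =>
    (hbox T).resolve_right (Finset.mem_filter.mp hT).2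
  have key := distribKey a x hx F hF
  refine hK.2.2.1 (_, y) (x, y) key le_rfl ?_
  refine biIdeal_supFst hK _ _ _ ?_
  intro R hR
  obtain ⟨-, hRne, hRmeet⟩ := Finset.mem_filter.mp hR
  rw [dif_pos hRne]
  have hyR : y ≤ R.sup b := by
    by_contra hc
    have hRc : Rᶜ ∈ F := Finset.mem_filter.mpr ⟨Finset.mem_univ _, by rwa [compl_compl]⟩
    have := hRmeet _ hRc
    rw [Finset.inter_compl] at this
    exact Finset.not_nonempty_empty this
  refine hK.2.2.1 (x ⊓ R.inf' hRne a, R.sup b) _ le_rfl hyR ?_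
  refine biIdeal_supSnd hK _ _ _ ?_
  intro i hi
  exact hgen i ⟨le_trans inf_le_right (Finset.inf'_le a hi), le_rfl⟩

lemma coreOr {A B : Type*} [Lattice A] [OrderBot A] [Lattice B] [OrderBot B]
    (hdist : (∀ x y z : A, x ⊓ (y ⊔ z) ≤ x ⊓ y ⊔ x ⊓ z) ∨
      (∀ x y z : B, x ⊓ (y ⊔ z) ≤ x ⊓ y ⊔ x ⊓ z))
    {ι : Type*} [Fintype ι] [DecidableEq ι] (a : ι → A) (b : ι → B)
    {K : Set (A × B)} (hK : IsBiIdeal K) (hgen : ∀ i, pureCirc (a i) (b i) ⊆ K)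
    {x : A} {y : B} (hbox : ∀ S : Finset ι, x ≤ S.sup a ∨ y ≤ Sᶜ.sup b) :
    (x, y) ∈ K := by
  rcases hdist with hd | hd
  · exact coreA hd a b hK hgen hbox
  · set K' : Set (B × A) := {q | (q.2, q.1) ∈ K} with hK'def
    have hK' : IsBiIdeal K' :=
      ⟨fun b' => hK.2.1 b', fun a' => hK.1 a',
        fun p q h1 h2 hp => hK.2.2.1 (p.2, p.1) (q.2, q.1) h2 h1 hp,
        fun b₀ b₁ a' h0 h1 => hK.2.2.2.2 a' b₀ b₁ h0 h1,
        fun b' a₀ a₁ h0 h1 => hK.2.2.2.1 a₀ a₁ b' h0 h1⟩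
    have hgen' : ∀ i, pureCirc (b i) (a i) ⊆ K' := fun i p hp => hgen i ⟨hp.2, hp.1⟩
    have hbox' : ∀ S : Finset ι, y ≤ S.sup b ∨ x ≤ Sᶜ.sup a := by
      intro S
      rcases hbox Sᶜ with h | h
      · exact Or.inr h
      · rw [compl_compl] at h
        exact Or.inl h
    exact coreA hd b a hK' hgen' hbox'

/-- If `A` or `B` is distributive, then the semilattice tensor product and the
lattice tensor product coincide: `A ⊗ B = A ⊠ B`. -/
theorem stmt_14 {A B : Type*} [Lattice A] [OrderBot A] [Lattice B] [OrderBot B]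
    (hdist : (∀ x y z : A, x ⊓ (y ⊔ z) ≤ x ⊓ y ⊔ x ⊓ z) ∨
      (∀ x y z : B, x ⊓ (y ⊔ z) ≤ x ⊓ y ⊔ x ⊓ z)) :
    TensProd A B = LatTens A B := by
  classical
  ext H
  constructor
  · rintro ⟨hH, n, a, b, hsub, hmin⟩
    have hsub' : ∀ i, pureCirc (a i) (b i) ⊆ H := fun i =>
      Set.Subset.trans (Set.subset_iUnion (fun i => pureCirc (a i) (b i)) i) hsub
    set D : Set (A × B) := ⋂ S : Finset (Fin (n + 1)), pureBox (S.sup a) (Sᶜ.sup b) with hDdef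
    have hDbi : IsBiIdeal D := isBiIdeal_iInter_pureBox _ _
    have hgenD : (⋃ i, pureCirc (a i) (b i)) ⊆ D := by
      refine Set.iUnion_subset fun i p hp => Set.mem_iInter.mpr fun S => ?_
      by_cases hiS : i ∈ S
      · exact Or.inl (le_trans hp.1 (Finset.le_sup hiS))
      · exact Or.inr (le_trans hp.2 (Finset.le_sup (Finset.mem_compl.mpr hiS)))
    have hHD : H ⊆ D := hmin D hDbi hgenD
    have hDH : D ⊆ H := by
      intro p hp
      have hbox : ∀ S : Finset (Fin (n + 1)), p.1 ≤ S.sup a ∨ p.2 ≤ Sᶜ.sup b := fun S =>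
        Set.mem_iInter.mp hp S
      exact coreOr hdist a b hH hsub' hbox
    have hHeq : H = D := Set.Subset.antisymm hHD hDH
    have hm1 : 2 ^ (n + 1) - 1 + 1 = 2 ^ (n + 1) :=
      Nat.succ_pred_eq_of_pos (Nat.two_pow_pos _)
    have hcard : Fintype.card (Finset (Fin (n + 1))) = 2 ^ (n + 1) - 1 + 1 := by
      rw [Fintype.card_finset, Fintype.card_fin, hm1]
    set e : Fin (2 ^ (n + 1) - 1 + 1) ≃ Finset (Fin (n + 1)) :=
      (Fintype.equivFinOfCardEq hcard).symm with hedef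
    constructor
    · refine ⟨2 ^ (n + 1) - 1, fun k => (e k).sup a, fun k => (e k)ᶜ.sup b, ?_⟩
      rw [hHeq, hDdef]
      exact (e.surjective.iInter_comp fun S => pureBox (S.sup a) (Sᶜ.sup b)).symm
    · refine ⟨Finset.univ.sup a, Finset.univ.sup b, ?_⟩
      intro p hp
      have h1 := Set.mem_iInter.mp (hHD hp) Finset.univ
      have h2 := Set.mem_iInter.mp (hHD hp) (∅ : Finset (Fin (n + 1)))
      rw [Finset.compl_univ, Finset.sup_empty] at h1
      rw [Finset.compl_empty, Finset.sup_empty] at h2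
      rcases h1 with h1 | h1
      · rcases h2 with h2 | h2
        · exact Or.inr (Or.inl fun z => le_trans h2 bot_le)
        · exact Or.inl ⟨h1, h2⟩
      · exact Or.inr (Or.inr fun z => le_trans h1 bot_le)
  · rintro ⟨⟨n, a, b, rfl⟩, u, v, hconf⟩
    set c : Finset (Fin (n + 1)) → A := fun S =>
      (insert none (S.image some)).inf' (Finset.insert_nonempty _ _)
        (fun o => Option.elim o u a) with hcdef
    set d : Finset (Fin (n + 1)) → B := fun S =>
      (insert none (Sᶜ.image some)).inf' (Finset.insert_nonempty _ _)
        (fun o => Option.elim o v b) with hddef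
    have hca : ∀ S, ∀ i ∈ S, c S ≤ a i := fun S i hi =>
      Finset.inf'_le _ (Finset.mem_insert_of_mem (Finset.mem_image_of_mem some hi))
    have hdb : ∀ S, ∀ i ∈ Sᶜ, d S ≤ b i := fun S i hi =>
      Finset.inf'_le _ (Finset.mem_insert_of_mem (Finset.mem_image_of_mem some hi))
    have hle_c : ∀ (S) (x : A), x ≤ u → (∀ i ∈ S, x ≤ a i) → x ≤ c S := by
      intro S x h1 h2
      refine Finset.le_inf' _ _ fun o ho => ?_
      rcases Finset.mem_insert.mp ho with rfl | ho
      · exact h1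
      · obtain ⟨i, hi, rfl⟩ := Finset.mem_image.mp ho
        exact h2 i hi
    have hle_d : ∀ (S) (y : B), y ≤ v → (∀ i ∈ Sᶜ, y ≤ b i) → y ≤ d S := by
      intro S y h1 h2
      refine Finset.le_inf' _ _ fun o ho => ?_
      rcases Finset.mem_insert.mp ho with rfl | ho
      · exact h1
      · obtain ⟨i, hi, rfl⟩ := Finset.mem_image.mp ho
        exact h2 i hi
    have hcircH : ∀ S, pureCirc (c S) (d S) ⊆ ⋂ i, pureBox (a i) (b i) := by
      intro S p hp
      refine Set.mem_iInter.mpr fun i => ?_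
      by_cases hiS : i ∈ S
      · exact Or.inl (le_trans hp.1 (hca S i hiS))
      · exact Or.inr (le_trans hp.2 (hdb S i (Finset.mem_compl.mpr hiS)))
    have hm1 : 2 ^ (n + 1) - 1 + 1 = 2 ^ (n + 1) :=
      Nat.succ_pred_eq_of_pos (Nat.two_pow_pos _)
    have hcard : Fintype.card (Finset (Fin (n + 1))) = 2 ^ (n + 1) - 1 + 1 := by
      rw [Fintype.card_finset, Fintype.card_fin, hm1]
    set e : Fin (2 ^ (n + 1) - 1 + 1) ≃ Finset (Fin (n + 1)) :=
      (Fintype.equivFinOfCardEq hcard).symm with hedef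
    refine ⟨isBiIdeal_iInter_pureBox a b,
      2 ^ (n + 1) - 1, fun k => c (e k), fun k => d (e k), ?_, ?_⟩
    · exact Set.iUnion_subset fun k => hcircH (e k)
    · intro K hK hKgen p hp
      have hpc := hconf hp
      rw [pureTens, Set.mem_union] at hpc
      rcases hpc with hmain | hbot
      · have h1 : p.1 ≤ u := hmain.1
        have h2 : p.2 ≤ v := hmain.2
        set S := Finset.univ.filter (fun i => p.1 ≤ a i) with hSdef
        have hx : p.1 ≤ c S := hle_c S p.1 h1 (fun i hi => (Finset.mem_filter.mp hi).2)
        have hy : p.2 ≤ d S := by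
          refine hle_d S p.2 h2 fun i hi => ?_
          have hni : ¬ p.1 ≤ a i := fun hcon =>
            (Finset.mem_compl.mp hi) (Finset.mem_filter.mpr ⟨Finset.mem_univ _, hcon⟩)
          rcases Set.mem_iInter.mp hp i with h | h
          · exact absurd h hni
          · exact h
        have hpmem : p ∈ pureCirc (c (e (e.symm S))) (d (e (e.symm S))) := by
          rw [e.apply_symm_apply]
          exact ⟨hx, hy⟩
        exact hKgen (Set.mem_iUnion.mpr ⟨e.symm S, hpmem⟩)
      · rcases hbot with hbot | hbot
        · exact hK.2.2.1 ((⊥ : A), p.2) p (hbot ⊥) le_rfl (hK.2.1 p.2)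
        · exact hK.2.2.1 (p.1, (⊥ : B)) p le_rfl (hbot ⊥) (hK.1 p.1)
end
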